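/- A fixed point of a contraction preserving a closed set of livelock-free fair processes is itself livelock-free and fair: suppose F : T↓ → T↓ is contractive with respect to d_W and maps every livelock-free W-fair element of T↓ to a livelock-free W-fair element. Then the unique fixed point μF = lim F^n(STOP) is livelock-free, and every infinite trace of μF contains infinitely many events from W. -/

import Mathlib

open scoped Classical

namespace CSPLL

variable {E : Type*}

/-- Events: `none` is the termination signal ✓, `some a` is a visible event. -/
abbrev Ev (E : Type*) := Option E

/-- A member of `Σ^{*✓}`: the termination event ✓ may occur only as the last element. -/
def ValidTrace (s : List (Ev E)) : Prop := (none : Ev E) ∉ s.dropLast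

/-- The semantic domain `T↓`: pairs `(T, D)` of (behavioural) traces and divergences
satisfying the axioms of the divergence-strict traces model. -/
structure TD (E : Type*) where
  T : Set (List (Ev E))
  D : Set (List (Ev E))
  valid : ∀ s ∈ T, ValidTrace s
  d_sub : D ⊆ T
  nonempty : [] ∈ T
  prefix_closed : ∀ s t : List (Ev E), s ++ t ∈ T → s ∈ T
  tick_div : ∀ s : List (Ev E), s ++ [none] ∈ D → s ∈ D
  div_ext : ∀ s t : List (Ev E), s ∈ D → (none : Ev E) ∉ s → ValidTrace t → s ++ t ∈ D

/-- Raw trace/divergence pairs. -/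
abbrev Pair (E : Type*) := Set (List (Ev E)) × Set (List (Ev E))

def TD.pair (P : TD E) : Pair E := (P.T, P.D)

/-- `lengthU U s` counts the occurrences of events from `U` in the trace `s`. -/
noncomputable def lengthU (U : Set E) (s : List (Ev E)) : ℕ :=
  (s.filter fun x => decide (∃ a ∈ U, x = some a)).length

/-- Restriction `(T,D) ↾_U n` of a trace/divergence pair to `U`-length `n`. -/
noncomputable def restrict (U : Set E) (n : ℕ) (P : Pair E) : Pair E :=
  let D' := P.2 ∪ {u | ∃ s t, s ∈ P.1 ∧ (none : Ev E) ∉ s ∧ lengthU U s = n ∧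
                       ValidTrace t ∧ u = s ++ t}
  (D' ∪ {s ∈ P.1 | lengthU U s ≤ n}, D')

/-- The metric `d_U(P,Q) = inf {2^{-n} | P ↾_U n = Q ↾_U n}` (taken in `[0,1]`). -/
noncomputable def dU (U : Set E) (P Q : Pair E) : ℝ :=
  sInf {x : ℝ | ∃ n : ℕ, restrict U n P = restrict U n Q ∧ x = (1 / 2 : ℝ) ^ n}

noncomputable def dTD (U : Set E) (P Q : TD E) : ℝ := dU U P.pair Q.pair

/-- The process STOP: the element `({⟨⟩}, ∅)` of `T↓`. -/
def STOP (E : Type*) : TD E where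
  T := {[]}
  D := ∅
  valid := by
    intro s hs
    rw [Set.mem_singleton_iff] at hs
    subst hs
    simp [ValidTrace]
  d_sub := by simp
  nonempty := rfl
  prefix_closed := by
    intro s t hs
    rw [Set.mem_singleton_iff] at hs
    rcases List.append_eq_nil_iff.mp hs with ⟨h1, _⟩
    simp [h1]
  tick_div := by simp
  div_ext := by simp

/-- `P` is `W`-fair: every infinite trace of `P` contains infinitely many `W`-events. -/
def WFair (W : Set E) (P : TD E) : Prop :=
  ∀ u : ℕ → E, (∀ n, (List.range n).map (fun i => (some (u i) : Ev E)) ∈ P.T) →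
    {n | u n ∈ W}.Infinite
section Lemmas

variable (U : Set E)

lemma lengthU_nil : lengthU U ([] : List (Ev E)) = 0 := by simp [lengthU]

lemma lengthU_append (s t : List (Ev E)) :
    lengthU U (s ++ t) = lengthU U s + lengthU U t := by
  simp [lengthU, List.filter_append]

lemma lengthU_cons_of_mem {a : Ev E} (h : ∃ b ∈ U, a = some b) (s : List (Ev E)) :
    lengthU U (a :: s) = lengthU U s + 1 := by
  simp [lengthU, List.filter_cons, h]

lemma lengthU_cons_of_not_mem {a : Ev E} (h : ¬ ∃ b ∈ U, a = some b) (s : List (Ev E)) :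
    lengthU U (a :: s) = lengthU U s := by
  simp [lengthU, List.filter_cons, h]

lemma split_at_lengthU :
    ∀ (s : List (Ev E)) (m : ℕ), m ≤ lengthU U s →
      ∃ s₁ s₂ : List (Ev E), s = s₁ ++ s₂ ∧ lengthU U s₁ = m := by
  intro s
  induction s with
  | nil =>
    intro m hm
    simp [lengthU_nil] at hm
    exact ⟨[], [], rfl, by simp [lengthU_nil, hm]⟩
  | cons a s ih =>
    intro m hm
    rcases m with _ | m'
    · exact ⟨[], a :: s, rfl, lengthU_nil U⟩
    · by_cases hb : ∃ b ∈ U, a = some b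
      · rw [lengthU_cons_of_mem U hb] at hm
        obtain ⟨s₁, s₂, hs, hl⟩ := ih m' (by omega)
        exact ⟨a :: s₁, s₂, by rw [hs]; rfl,
          by rw [lengthU_cons_of_mem U hb, hl]⟩
      · rw [lengthU_cons_of_not_mem U hb] at hm
        obtain ⟨s₁, s₂, hs, hl⟩ := ih (m' + 1) hm
        exact ⟨a :: s₁, s₂, by rw [hs]; rfl,
          by rw [lengthU_cons_of_not_mem U hb, hl]⟩

lemma validTrace_append {s t : List (Ev E)} (h1 : (none : Ev E) ∉ s)
    (h2 : ValidTrace t) : ValidTrace (s ++ t) := by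
  rcases eq_or_ne t [] with rfl | ht
  · simpa [ValidTrace] using fun h => h1 ((List.dropLast_sublist s).subset h)
  · unfold ValidTrace at h2 ⊢
    rw [List.dropLast_append_of_ne_nil ht]
    intro h
    rcases List.mem_append.mp h with h | h
    · exact h1 h
    · exact h2 h

lemma mem_restrict_snd {P : Pair E} {n : ℕ} {u : List (Ev E)} :
    u ∈ (restrict U n P).2 ↔ u ∈ P.2 ∨ ∃ s t, s ∈ P.1 ∧ (none : Ev E) ∉ s ∧
      lengthU U s = n ∧ ValidTrace t ∧ u = s ++ t := by
  simp [restrict, Set.mem_union, Set.mem_setOf_eq]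

lemma mem_restrict_fst {P : Pair E} {n : ℕ} {u : List (Ev E)} :
    u ∈ (restrict U n P).1 ↔ u ∈ (restrict U n P).2 ∨ (u ∈ P.1 ∧ lengthU U u ≤ n) := by
  constructor
  · rintro (h | h)
    · exact Or.inl h
    · exact Or.inr h
  · rintro (h | h)
    · exact Or.inl h
    · exact Or.inr h

lemma restrict_zero (P : TD E) :
    restrict U 0 P.pair = ({t | ValidTrace t}, {t | ValidTrace t}) := by
  have hsnd : (restrict U 0 P.pair).2 = {t | ValidTrace t} := by
    ext u
    rw [mem_restrict_snd]
    constructor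
    · rintro (hu | ⟨s, t, hs, hns, _, hvt, rfl⟩)
      · exact P.valid u (P.d_sub hu)
      · exact validTrace_append hns hvt
    · intro hu
      exact Or.inr ⟨[], u, P.nonempty, by simp, lengthU_nil U, hu, rfl⟩
  have hfst : (restrict U 0 P.pair).1 = {t | ValidTrace t} := by
    ext u
    rw [mem_restrict_fst, hsnd]
    constructor
    · rintro (hu | ⟨hu, _⟩)
      · exact hu
      · exact P.valid u hu
    · exact fun hu => Or.inl hu
  calc restrict U 0 P.pair = ((restrict U 0 P.pair).1, (restrict U 0 P.pair).2) := rfl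
    _ = _ := by rw [hsnd, hfst]

end Lemmas
section Lemmas2

variable (U : Set E)

/-- Membership in the "extension" part at a lower level. -/
lemma ext_mono {P : TD E} {m n : ℕ} (hmn : m ≤ n) {u : List (Ev E)}
    (h : ∃ s t, s ∈ P.T ∧ (none : Ev E) ∉ s ∧ lengthU U s = n ∧ ValidTrace t ∧ u = s ++ t) :
    ∃ s t, s ∈ P.T ∧ (none : Ev E) ∉ s ∧ lengthU U s = m ∧ ValidTrace t ∧ u = s ++ t := by
  obtain ⟨s, t, hs, hns, hl, hvt, rfl⟩ := h
  obtain ⟨s₁, s₂, rfl, hl1⟩ := split_at_lengthU U s m (hl ▸ hmn)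
  refine ⟨s₁, s₂ ++ t, P.prefix_closed s₁ s₂ hs, fun h => hns (List.mem_append.mpr (Or.inl h)),
    hl1, validTrace_append (fun h => hns (List.mem_append.mpr (Or.inr h))) hvt, by simp⟩

lemma restrict_restrict {P : TD E} {m n : ℕ} (hmn : m ≤ n) :
    restrict U m (restrict U n P.pair) = restrict U m P.pair := by
  have hsnd : (restrict U m (restrict U n P.pair)).2 = (restrict U m P.pair).2 := by
    ext u
    constructor
    · intro h
      apply (mem_restrict_snd U).mpr
      rcases (mem_restrict_snd U).mp h with hu | ⟨s, t, hs, hns, hl, hvt, rfl⟩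
      · rcases (mem_restrict_snd U).mp hu with hu' | hext
        · exact Or.inl hu'
        · exact Or.inr (ext_mono U hmn hext)
      · rcases (mem_restrict_fst U).mp hs with hs' | ⟨hs', _⟩
        · rcases (mem_restrict_snd U).mp hs' with hsd | ⟨s', t', hs'', hns', hl', hvt', rfl⟩
          · exact Or.inl (P.div_ext s t hsd hns hvt)
          · have h1 := lengthU_append U s' t'
            have hmn' : m = n := by omega
            subst hmn'
            exact Or.inr ⟨s', t' ++ t, hs'', hns', hl',
              validTrace_append (fun h => hns (List.mem_append.mpr (Or.inr h))) hvt, by simp⟩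
        · exact Or.inr ⟨s, t, hs', hns, hl, hvt, rfl⟩
    · intro h
      apply (mem_restrict_snd U).mpr
      rcases (mem_restrict_snd U).mp h with hu | ⟨s, t, hs, hns, hl, hvt, rfl⟩
      · exact Or.inl ((mem_restrict_snd U).mpr (Or.inl hu))
      · exact Or.inr ⟨s, t, (mem_restrict_fst U).mpr (Or.inr ⟨hs, hl ▸ hmn⟩), hns, hl, hvt, rfl⟩
  have hfst : (restrict U m (restrict U n P.pair)).1 = (restrict U m P.pair).1 := by
    ext u
    constructor
    · intro h
      apply (mem_restrict_fst U).mpr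
      rcases (mem_restrict_fst U).mp h with hu | ⟨hu, hl⟩
      · exact Or.inl (hsnd ▸ hu)
      · rcases (mem_restrict_fst U).mp hu with hu' | ⟨hu', _⟩
        · rcases (mem_restrict_snd U).mp hu' with hud | ⟨s, t, hs, hns, hln, hvt, rfl⟩
          · exact Or.inl ((mem_restrict_snd U).mpr (Or.inl hud))
          · have h1 := lengthU_append U s t
            exact Or.inl ((mem_restrict_snd U).mpr (Or.inr ⟨s, t, hs, hns, by omega, hvt, rfl⟩))
        · exact Or.inr ⟨hu', hl⟩
    · intro h
      apply (mem_restrict_fst U).mpr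
      rcases (mem_restrict_fst U).mp h with hu | ⟨hu, hl⟩
      · exact Or.inl (hsnd ▸ hu)
      · exact Or.inr ⟨(mem_restrict_fst U).mpr (Or.inr ⟨hu, le_trans hl hmn⟩), hl⟩
  calc restrict U m (restrict U n P.pair)
      = ((restrict U m (restrict U n P.pair)).1, (restrict U m (restrict U n P.pair)).2) := rfl
    _ = _ := by rw [hsnd, hfst]

/-- Agreement is antitone in the level. -/
lemma agree_mono {P Q : TD E} {m n : ℕ} (hmn : m ≤ n)
    (h : restrict U n P.pair = restrict U n Q.pair) :
    restrict U m P.pair = restrict U m Q.pair := by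
  rw [← restrict_restrict U (P := P) hmn, h, restrict_restrict U (P := Q) hmn]

/-- Recovery of `D` from a restriction at a strictly higher level. -/
lemma mem_snd_recover {P : TD E} {n : ℕ} {u : List (Ev E)} (hl : lengthU U u < n) :
    u ∈ (restrict U n P.pair).2 ↔ u ∈ P.D := by
  rw [mem_restrict_snd]
  constructor
  · rintro (hu | ⟨s, t, hs, hns, hln, hvt, rfl⟩)
    · exact hu
    · have := lengthU_append U s t
      omega
  · exact Or.inl

/-- Recovery of `T` from a restriction at a strictly higher level. -/
lemma mem_fst_recover {P : TD E} {n : ℕ} {u : List (Ev E)} (hl : lengthU U u < n) :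
    u ∈ (restrict U n P.pair).1 ↔ u ∈ P.T := by
  rw [mem_restrict_fst]
  constructor
  · rintro (hu | ⟨hu, _⟩)
    · exact P.d_sub ((mem_snd_recover U hl).mp hu)
    · exact hu
  · exact fun hu => Or.inr ⟨hu, le_of_lt hl⟩

/-- Separation: agreement at all levels implies equality. -/
lemma eq_of_agree_all {P Q : TD E} (h : ∀ n, restrict U n P.pair = restrict U n Q.pair) :
    P = Q := by
  have hT : P.T = Q.T := by
    ext u
    rw [← mem_fst_recover U (P := P) (n := lengthU U u + 1) (Nat.lt_succ_self _),
      ← mem_fst_recover U (P := Q) (n := lengthU U u + 1) (Nat.lt_succ_self _), h]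
  have hD : P.D = Q.D := by
    ext u
    rw [← mem_snd_recover U (P := P) (n := lengthU U u + 1) (Nat.lt_succ_self _),
      ← mem_snd_recover U (P := Q) (n := lengthU U u + 1) (Nat.lt_succ_self _), h]
  cases P; cases Q; simp_all

end Lemmas2
section Metric

variable (U : Set E)

lemma dset_bddBelow (P Q : TD E) :
    BddBelow {x : ℝ | ∃ n : ℕ, restrict U n P.pair = restrict U n Q.pair ∧ x = (1 / 2 : ℝ) ^ n} := by
  refine ⟨0, fun x hx => ?_⟩
  obtain ⟨n, _, rfl⟩ := hx
  positivity

lemma dset_nonempty (P Q : TD E) :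
    Set.Nonempty {x : ℝ | ∃ n : ℕ, restrict U n P.pair = restrict U n Q.pair ∧ x = (1 / 2 : ℝ) ^ n} :=
  ⟨1, 0, by rw [restrict_zero, restrict_zero], by norm_num⟩

lemma dTD_le_of_agree {P Q : TD E} {n : ℕ}
    (h : restrict U n P.pair = restrict U n Q.pair) : dTD U P Q ≤ (1 / 2 : ℝ) ^ n :=
  csInf_le (dset_bddBelow U P Q) ⟨n, h, rfl⟩

lemma dTD_nonneg (P Q : TD E) : 0 ≤ dTD U P Q :=
  le_csInf (dset_nonempty U P Q) (fun x hx => by obtain ⟨n, _, rfl⟩ := hx; positivity)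

lemma dTD_le_one (P Q : TD E) : dTD U P Q ≤ 1 := by
  simpa using dTD_le_of_agree U (P := P) (Q := Q) (n := 0) (by rw [restrict_zero, restrict_zero])

lemma agree_of_dTD_le {P Q : TD E} {n : ℕ} (h : dTD U P Q ≤ (1 / 2 : ℝ) ^ n) :
    restrict U n P.pair = restrict U n Q.pair := by
  by_contra hne
  have hlb : ∀ x ∈ {x : ℝ | ∃ k : ℕ, restrict U k P.pair = restrict U k Q.pair ∧
      x = (1 / 2 : ℝ) ^ k}, (1 / 2 : ℝ) ^ (n - 1) ≤ x := by
    rintro x ⟨k, hk, rfl⟩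
    have hkn : k < n := by
      by_contra hge
      exact hne (agree_mono U (le_of_not_gt hge) hk)
    exact pow_le_pow_of_le_one (by norm_num) (by norm_num) (by omega)
  have h1 := le_csInf (dset_nonempty U P Q) hlb
  have hn : 1 ≤ n := by
    rcases Nat.eq_zero_or_pos n with rfl | h'
    · exact absurd (by rw [restrict_zero, restrict_zero]) hne
    · exact h'
  have : (1 / 2 : ℝ) ^ (n - 1) ≤ (1 / 2 : ℝ) ^ n := le_trans h1 h
  have := pow_lt_pow_right_of_lt_one₀ (by norm_num : (0:ℝ) < 1/2) (by norm_num) (by omega : n - 1 < n)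
  linarith

lemma dTD_comm (P Q : TD E) : dTD U P Q = dTD U Q P := by
  unfold dTD dU
  congr 1
  ext x
  constructor
  · rintro ⟨n, h, rfl⟩; exact ⟨n, h.symm, rfl⟩
  · rintro ⟨n, h, rfl⟩; exact ⟨n, h.symm, rfl⟩

lemma eq_of_dTD_eq_zero {P Q : TD E} (h : dTD U P Q = 0) : P = Q := by
  apply eq_of_agree_all U
  intro n
  exact agree_of_dTD_le U (h ▸ by positivity)

end Metric
section Limit

variable (U : Set E)

/-- The limit of a sequence of processes: eventual traces and divergences. -/
def TDlim (P : ℕ → TD E) : TD E where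
  T := {s | ∃ K, ∀ k ≥ K, s ∈ (P k).T}
  D := {s | ∃ K, ∀ k ≥ K, s ∈ (P k).D}
  valid := fun s ⟨K, h⟩ => (P K).valid s (h K le_rfl)
  d_sub := fun s ⟨K, h⟩ => ⟨K, fun k hk => (P k).d_sub (h k hk)⟩
  nonempty := ⟨0, fun k _ => (P k).nonempty⟩
  prefix_closed := fun s t ⟨K, h⟩ => ⟨K, fun k hk => (P k).prefix_closed s t (h k hk)⟩
  tick_div := fun s ⟨K, h⟩ => ⟨K, fun k hk => (P k).tick_div s (h k hk)⟩
  div_ext := fun s t ⟨K, h⟩ hns hvt => ⟨K, fun k hk => (P k).div_ext s t (h k hk) hns hvt⟩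

variable {P : ℕ → TD E}
variable (hstab : ∀ n : ℕ, ∃ K, ∀ k ≥ K, restrict U n (P k).pair = restrict U n (P K).pair)

include hstab

/-- Membership of each trace stabilizes along the sequence, to its limit value. -/
lemma stab_mem (s : List (Ev E)) :
    ∃ K, ∀ k ≥ K, (s ∈ (P k).T ↔ s ∈ (TDlim P).T) ∧ (s ∈ (P k).D ↔ s ∈ (TDlim P).D) := by
  obtain ⟨K, hK⟩ := hstab (lengthU U s + 1)
  have hconstT : ∀ k ≥ K, (s ∈ (P k).T ↔ s ∈ (P K).T) := by
    intro k hk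
    rw [← mem_fst_recover U (P := P k) (n := lengthU U s + 1) (Nat.lt_succ_self _),
      ← mem_fst_recover U (P := P K) (n := lengthU U s + 1) (Nat.lt_succ_self _), hK k hk]
  have hconstD : ∀ k ≥ K, (s ∈ (P k).D ↔ s ∈ (P K).D) := by
    intro k hk
    rw [← mem_snd_recover U (P := P k) (n := lengthU U s + 1) (Nat.lt_succ_self _),
      ← mem_snd_recover U (P := P K) (n := lengthU U s + 1) (Nat.lt_succ_self _), hK k hk]
  refine ⟨K, fun k hk => ⟨?_, ?_⟩⟩
  · rw [hconstT k hk]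
    constructor
    · intro h
      exact ⟨K, fun j hj => (hconstT j hj).mpr h⟩
    · rintro ⟨K', h⟩
      exact (hconstT (max K K') (le_max_left _ _)).mp (h _ (le_max_right _ _))
  · rw [hconstD k hk]
    constructor
    · intro h
      exact ⟨K, fun j hj => (hconstD j hj).mpr h⟩
    · rintro ⟨K', h⟩
      exact (hconstD (max K K') (le_max_left _ _)).mp (h _ (le_max_right _ _))

/-- The restrictions of the limit agree with the eventual restrictions. -/
lemma restrict_lim (n : ℕ) :
    ∃ K, ∀ k ≥ K, restrict U n (TDlim P).pair = restrict U n (P k).pair := by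
  classical
  obtain ⟨K, hK⟩ := hstab n
  choose KT hKT using stab_mem U hstab
  suffices h : restrict U n (TDlim P).pair = restrict U n (P K).pair by
    exact ⟨K, fun k hk => h.trans (hK k hk).symm⟩
  have hsnd : (restrict U n (TDlim P).pair).2 = (restrict U n (P K).pair).2 := by
    ext u
    constructor
    · intro h
      rcases (mem_restrict_snd U).mp h with ⟨K', hu⟩ | ⟨s, t, ⟨K', hs⟩, hns, hl, hvt, rfl⟩
      · have : u ∈ (restrict U n (P (max K K')).pair).2 :=
          (mem_restrict_snd U).mpr (Or.inl (hu _ (le_max_right _ _)))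
        rwa [hK _ (le_max_left _ _)] at this
      · have : s ++ t ∈ (restrict U n (P (max K K')).pair).2 :=
          (mem_restrict_snd U).mpr (Or.inr ⟨s, t, hs _ (le_max_right _ _), hns, hl, hvt, rfl⟩)
        rwa [hK _ (le_max_left _ _)] at this
    · intro h
      set k : ℕ := max K ((Finset.range (u.length + 1)).sup (fun i => KT (u.take i))) with hk
      have hkK : K ≤ k := le_max_left _ _
      have hkT : ∀ i, i ≤ u.length → KT (u.take i) ≤ k := by
        intro i hi
        have h1 : KT (u.take i) ≤ (Finset.range (u.length + 1)).sup (fun j => KT (u.take j)) :=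
          Finset.le_sup (f := fun j => KT (u.take j)) (Finset.mem_range.mpr (by omega))
        exact le_trans h1 (le_max_right _ _)
      have h' : u ∈ (restrict U n (P k).pair).2 := by rw [hK k hkK]; exact h
      apply (mem_restrict_snd U).mpr
      rcases (mem_restrict_snd U).mp h' with hu | ⟨s, t, hs, hns, hl, hvt, rfl⟩
      · refine Or.inl ?_
        have := (hKT u k ?_).2.mp hu
        · exact this
        · simpa [List.take_length] using hkT u.length le_rfl
      · refine Or.inr ⟨s, t, ?_, hns, hl, hvt, rfl⟩
        have hsl : s = (s ++ t).take s.length := by rw [List.take_left]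
        have hle : s.length ≤ (s ++ t).length := by simp
        have := (hKT ((s ++ t).take s.length) k (hkT s.length hle)).1.mp (by rw [← hsl]; exact hs)
        rwa [← hsl] at this
  have hfst : (restrict U n (TDlim P).pair).1 = (restrict U n (P K).pair).1 := by
    ext u
    constructor
    · intro h
      rcases (mem_restrict_fst U).mp h with hu | ⟨⟨K', hu⟩, hl⟩
      · exact (mem_restrict_fst U).mpr (Or.inl (hsnd ▸ hu))
      · have : u ∈ (restrict U n (P (max K K')).pair).1 :=
          (mem_restrict_fst U).mpr (Or.inr ⟨hu _ (le_max_right _ _), hl⟩)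
        rwa [hK _ (le_max_left _ _)] at this
    · intro h
      rcases (mem_restrict_fst U).mp h with hu | ⟨hu, hl⟩
      · exact (mem_restrict_fst U).mpr (Or.inl (hsnd ▸ hu))
      · set k : ℕ := max K (KT u) with hk
        have h2 : u ∈ (restrict U n (P k).pair).1 := by
          rw [hK k (le_max_left _ _)]
          exact (mem_restrict_fst U).mpr (Or.inr ⟨hu, hl⟩)
        rcases (mem_restrict_fst U).mp h2 with h' | ⟨h', _⟩
        · apply (mem_restrict_fst U).mpr
          left
          rw [hsnd, ← hK k (le_max_left _ _)]
          exact h'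
        · exact (mem_restrict_fst U).mpr
            (Or.inr ⟨(hKT u k (le_max_right _ _)).1.mp h', hl⟩)
  calc restrict U n (TDlim P).pair
      = ((restrict U n (TDlim P).pair).1, (restrict U n (TDlim P).pair).2) := rfl
    _ = _ := by rw [hsnd, hfst]

end Limit

/-- A fixed point of a contraction preserving the (closed) set of livelock-free
`W`-fair processes is itself livelock-free and `W`-fair; it is the limit of the
iterates `F^n(STOP)`. -/
theorem fixed_point_livelockFree_fair (W : Set E) (F : TD E → TD E)
    (hF : ∃ c : ℝ, 0 ≤ c ∧ c < 1 ∧ ∀ P Q : TD E, dTD W (F P) (F Q) ≤ c * dTD W P Q)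
    (hpres : ∀ P : TD E, P.D = ∅ → WFair W P → (F P).D = ∅ ∧ WFair W (F P)) :
    ∃ P : TD E, F P = P ∧ (∀ Q : TD E, F Q = Q → Q = P) ∧
      (∀ ε : ℝ, 0 < ε → ∃ N : ℕ, ∀ n ≥ N, dTD W (F^[n] (STOP E)) P < ε) ∧
      P.D = ∅ ∧ WFair W P := by
  obtain ⟨c, hc0, hc1, hcontr⟩ := hF
  set Pk : ℕ → TD E := fun k => F^[k] (STOP E) with hPk
  have hPksucc : ∀ k, Pk (k + 1) = F (Pk k) := fun k => Function.iterate_succ_apply' F k _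
  -- distance between consecutive iterates
  have hiter : ∀ k, dTD W (Pk k) (Pk (k + 1)) ≤ c ^ k := by
    intro k
    induction k with
    | zero => simpa using dTD_le_one W (Pk 0) (Pk 1)
    | succ k ih =>
      have h1 := hcontr (Pk k) (Pk (k + 1))
      rw [← hPksucc (k + 1), ← hPksucc k] at h1
      calc dTD W (Pk (k + 1)) (Pk (k + 1 + 1)) ≤ c * dTD W (Pk k) (Pk (k + 1)) := h1
        _ ≤ c * c ^ k := mul_le_mul_of_nonneg_left ih hc0
        _ = c ^ (k + 1) := by ring
  -- stabilization of restrictions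
  have hstab : ∀ n : ℕ, ∃ K, ∀ k ≥ K, restrict W n (Pk k).pair = restrict W n (Pk K).pair := by
    intro n
    obtain ⟨k₀, hk₀⟩ := exists_pow_lt_of_lt_one (pow_pos (by norm_num : (0:ℝ) < 1/2) n) hc1
    have hagree : ∀ k ≥ k₀, restrict W n (Pk k).pair = restrict W n (Pk (k + 1)).pair := by
      intro k hk
      apply agree_of_dTD_le W
      calc dTD W (Pk k) (Pk (k + 1)) ≤ c ^ k := hiter k
        _ ≤ c ^ k₀ := pow_le_pow_of_le_one hc0 hc1.le hk
        _ ≤ (1 / 2) ^ n := hk₀.le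
    refine ⟨k₀, fun k hk => ?_⟩
    obtain ⟨j, rfl⟩ : ∃ j, k = k₀ + j := ⟨k - k₀, by omega⟩
    clear hk
    induction j with
    | zero => rfl
    | succ j ih => rw [← Nat.add_assoc, ← hagree (k₀ + j) (by omega), ih]
  set Plim : TD E := TDlim Pk with hPlim
  have hlim : ∀ n : ℕ, ∃ K, ∀ k ≥ K, restrict W n Plim.pair = restrict W n (Pk k).pair :=
    restrict_lim W hstab
  -- convergence
  have hconv : ∀ ε : ℝ, 0 < ε → ∃ N : ℕ, ∀ n ≥ N, dTD W (Pk n) Plim < ε := by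
    intro ε hε
    obtain ⟨m, hm⟩ := exists_pow_lt_of_lt_one hε (by norm_num : (1/2 : ℝ) < 1)
    obtain ⟨K, hK⟩ := hlim m
    refine ⟨K, fun n hn => lt_of_le_of_lt ?_ hm⟩
    exact dTD_le_of_agree W (hK n hn).symm
  -- fixed point
  have hfix : F Plim = Plim := by
    apply eq_of_agree_all W
    intro n
    obtain ⟨K, hK⟩ := hlim n
    have hεpos : (0:ℝ) < (1 / 2) ^ n / (c + 1) := by positivity
    obtain ⟨N, hN⟩ := hconv _ hεpos
    set k : ℕ := max N K with hk
    have hd1 : dTD W Plim (Pk k) < (1 / 2) ^ n / (c + 1) := by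
      rw [dTD_comm]
      exact hN k (le_max_left _ _)
    have hd2 : dTD W (F Plim) (F (Pk k)) ≤ (1 / 2 : ℝ) ^ n := by
      calc dTD W (F Plim) (F (Pk k)) ≤ c * dTD W Plim (Pk k) := hcontr _ _
        _ ≤ c * ((1 / 2) ^ n / (c + 1)) := mul_le_mul_of_nonneg_left hd1.le hc0
        _ ≤ (1 / 2 : ℝ) ^ n := by
            rw [mul_div_assoc']
            rw [div_le_iff₀ (by linarith)]
            have : (0:ℝ) < (1/2:ℝ)^n := by positivity
            nlinarith
    calc restrict W n (F Plim).pair = restrict W n (F (Pk k)).pair := agree_of_dTD_le W hd2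
      _ = restrict W n (Pk (k + 1)).pair := by rw [hPksucc k]
      _ = restrict W n Plim.pair := (hK (k + 1) (le_trans (le_max_right N K) (Nat.le_succ _))).symm
  -- uniqueness
  have huniq : ∀ Q : TD E, F Q = Q → Q = Plim := by
    intro Q hQ
    have h1 : dTD W Q Plim ≤ c * dTD W Q Plim := by
      conv_lhs => rw [← hQ, ← hfix]
      exact hcontr _ _
    have h2 : dTD W Q Plim = 0 :=
      le_antisymm (by nlinarith [dTD_nonneg W Q Plim]) (dTD_nonneg W Q Plim)
    exact eq_of_dTD_eq_zero W h2
  -- livelock-freedom and fairness of the iterates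
  have hLF : ∀ k, (Pk k).D = ∅ ∧ WFair W (Pk k) := by
    intro k
    induction k with
    | zero =>
      refine ⟨rfl, fun u hu => ?_⟩
      have h1 := hu 1
      simp [hPk, STOP, List.range_succ] at h1
    | succ k ih =>
      rw [hPksucc k]
      exact hpres _ ih.1 ih.2
  -- livelock-freedom of the limit
  have hD : Plim.D = ∅ := by
    rw [Set.eq_empty_iff_forall_notMem]
    rintro s ⟨K, hs⟩
    have := hs K le_rfl
    rw [(hLF K).1] at this
    exact this
  -- fairness of the limit
  have hfair : WFair W Plim := by
    intro u hu
    by_contra hfin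
    rw [Set.not_infinite] at hfin
    obtain ⟨N, hN⟩ := hfin.bddAbove
    have hNW : ∀ i, N + 1 ≤ i → u i ∉ W := by
      intro i hi hiW
      have := hN hiW
      omega
    set pref : ℕ → List (Ev E) := fun n => (List.range n).map (fun i => (some (u i) : Ev E))
      with hpref
    set B : ℕ := lengthU W (pref (N + 1)) with hB
    have hsplit : ∀ a b : ℕ, pref (a + b) =
        pref a ++ (List.range b).map (fun i => (some (u (a + i)) : Ev E)) := by
      intro a b
      rw [hpref]
      simp only [List.range_add, List.map_append, List.map_map]
      rfl
    have hBound : ∀ n, lengthU W (pref n) ≤ B := by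
      intro n
      rcases le_or_gt n (N + 1) with h | h
      · have h1 : pref (N + 1) = pref n ++ (List.range (N + 1 - n)).map
            (fun i => (some (u (n + i)) : Ev E)) := by
          have h2 := hsplit n (N + 1 - n)
          rwa [show n + (N + 1 - n) = N + 1 by omega] at h2
        rw [hB, h1, lengthU_append]
        omega
      · have h1 : pref n = pref (N + 1) ++ (List.range (n - (N + 1))).map
            (fun i => (some (u (N + 1 + i)) : Ev E)) := by
          have h2 := hsplit (N + 1) (n - (N + 1))
          rwa [show (N + 1) + (n - (N + 1)) = n by omega] at h2
        rw [h1, lengthU_append]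
        have hz : lengthU W ((List.range (n - (N + 1))).map
            (fun i => (some (u (N + 1 + i)) : Ev E))) = 0 := by
          rw [lengthU, List.length_eq_zero_iff, List.filter_eq_nil_iff]
          intro a ha
          simp only [List.mem_map, List.mem_range] at ha
          obtain ⟨j, hj, rfl⟩ := ha
          simp only [decide_eq_true_eq]
          rintro ⟨b, hbW, hb⟩
          have hub : u (N + 1 + j) = b := by injection hb
          exact hNW (N + 1 + j) (by omega) (hub ▸ hbW)
        omega
    obtain ⟨K, hK⟩ := hlim (B + 1)
    have hmem : ∀ n, pref n ∈ (Pk K).T := by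
      intro n
      have h1 : pref n ∈ Plim.T := hu n
      have h2 : pref n ∈ (restrict W (B + 1) Plim.pair).1 :=
        (mem_restrict_fst W).mpr (Or.inr ⟨h1, le_trans (hBound n) (by omega)⟩)
      rw [hK K le_rfl] at h2
      exact (mem_fst_recover W (Nat.lt_succ_of_le (hBound n))).mp h2
    exact hfin.not_infinite ((hLF K).2 u hmem)
  exact ⟨Plim, hfix, huniq, hconv, hD, hfair⟩

end CSPLL
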